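/- If every angle of triangle ABC is less than 120°, then the first isodynamic point S lies in the interior of triangle ABC. -/

import Mathlib

open EuclideanGeometry Real

noncomputable section

abbrev Pt := EuclideanSpace ℝ (Fin 2)

/-- `S` is the first isodynamic point of triangle `ABC`: it lies on the three
Apollonius circles (e.g. the `A`-Apollonius circle is the locus of `P` with
`PB/PC = AB/AC`) and lies inside the circumcircle. -/
def IsFirstIsodynamic (A B C S : Pt) : Prop :=
  dist S B * dist A C = dist S C * dist A B ∧
  dist S A * dist B C = dist S C * dist B A ∧
  dist S A * dist C B = dist S B * dist C A ∧
  ∃ O r, dist O A = r ∧ dist O B = r ∧ dist O C = r ∧ dist O S < r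

private lemma quadcase (x1 y1 x2 y2 t : ℝ) (ht : t^2 = 3)
    (hn : 0 < x1^2 + y1^2)
    (hm : x2^2 + y2^2 = x1^2 + y1^2)
    (hR : 2*(x1*x2 + y1*y2) + (x1^2 + y1^2) = 0) :
    (x2 = -x1/2 - t*y1/2 ∧ y2 = t*x1/2 - y1/2) ∨
    (x2 = -x1/2 + t*y1/2 ∧ y2 = -t*x1/2 - y1/2) := by
  have hn2 : (0:ℝ) < (x1^2+y1^2)^2 := by positivity
  have hTre : x2^2 - y2^2 + x1*x2 - y1*y2 + x1^2 - y1^2 = 0 := by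
    have h : (x1^2+y1^2)^2 * (x2^2 - y2^2 + x1*x2 - y1*y2 + x1^2 - y1^2) = 0 := by
      linear_combination ((x1^2-y1^2)*(x1*x2+y1*y2) - (2*x1*y1)*(y2*x1-x2*y1)) * hR
        + (-(x1^2-y1^2)*(x1^2+y1^2)) * hm
    rcases mul_eq_zero.mp h with h' | h'
    · exact absurd h' hn2.ne'
    · exact h'
  have hTim : 2*x2*y2 + x1*y2 + y1*x2 + 2*x1*y1 = 0 := by
    have h : (x1^2+y1^2)^2 * (2*x2*y2 + x1*y2 + y1*x2 + 2*x1*y1) = 0 := by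
      linear_combination ((2*x1*y1)*(x1*x2+y1*y2) + (x1^2-y1^2)*(y2*x1-x2*y1)) * hR
        + (-(2*x1*y1)*(x1^2+y1^2)) * hm
    rcases mul_eq_zero.mp h with h' | h'
    · exact absurd h' hn2.ne'
    · exact h'
  have hff : ((x2 + x1/2 + t*y1/2)^2 + (y2 - t*x1/2 + y1/2)^2)
      * ((x2 + x1/2 - t*y1/2)^2 + (y2 + t*x1/2 + y1/2)^2) = 0 := by
    linear_combination (x2^2 - y2^2 + x1*x2 - y1*y2 + x1^2 - y1^2) * hTre
      + (2*x2*y2 + x1*y2 + y1*x2 + 2*x1*y1) * hTim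
      + ((1/8)*t^2*x1^2*y1^2 + (1/16)*t^2*x1^4 + (1/16)*t^2*y1^4 + 2*x1*x2*y1*y2 + (1/2)*x1*x2*y1^2 + (1/2)*x1^2*x2^2 + (1/2)*x1^2*y1*y2 + (5/8)*x1^2*y1^2 + (-1/2)*x1^2*y2^2 + (1/2)*x1^3*x2 + (5/16)*x1^4 + (-1/2)*x2^2*y1^2 + (1/2)*y1^2*y2^2 + (1/2)*y1^3*y2 + (5/16)*y1^4) * ht
  rcases mul_eq_zero.mp hff with h | h
  · left
    have hA1 : (x2 + x1/2 + t*y1/2)^2 = 0 := by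
      linarith [sq_nonneg (x2 + x1/2 + t*y1/2), sq_nonneg (y2 - t*x1/2 + y1/2)]
    have hB1 : (y2 - t*x1/2 + y1/2)^2 = 0 := by
      linarith [sq_nonneg (x2 + x1/2 + t*y1/2), sq_nonneg (y2 - t*x1/2 + y1/2)]
    have hA2 := (pow_eq_zero_iff (two_ne_zero)).mp hA1
    have hB2 := (pow_eq_zero_iff (two_ne_zero)).mp hB1
    constructor <;> linarith
  · right
    have hA1 : (x2 + x1/2 - t*y1/2)^2 = 0 := by
      linarith [sq_nonneg (x2 + x1/2 - t*y1/2), sq_nonneg (y2 + t*x1/2 + y1/2)]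
    have hB1 : (y2 + t*x1/2 + y1/2)^2 = 0 := by
      linarith [sq_nonneg (x2 + x1/2 - t*y1/2), sq_nonneg (y2 + t*x1/2 + y1/2)]
    have hA2 := (pow_eq_zero_iff (two_ne_zero)).mp hA1
    have hB2 := (pow_eq_zero_iff (two_ne_zero)).mp hB1
    constructor <;> linarith

private lemma sign_helper (P E Mv G : ℝ) (h2 : 2*P*E*Mv = G) (hP : P < 0) (hM : 0 < Mv)
    (hG : 0 < G) : E < 0 := by
  by_contra hcon
  push_neg at hcon
  nlinarith [mul_nonneg hcon hM.le, hP, hG, h2]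

private lemma pos_helper (J Mv K : ℝ) (h : 2*J*Mv = K) (hM : 0 < Mv) (hK : 0 < K) : 0 < J := by
  by_contra hcon
  push_neg at hcon
  nlinarith [mul_nonneg (neg_nonneg.mpr hcon) hM.le, hK, h]

set_option maxHeartbeats 16000000 in
private lemma branch (p0 p1 q0 q1 s0 s1 w0 w1 LA LB LC t e : ℝ)
    (ht : t^2 = 3) (ht0 : 0 < t) (he : e^2 = 1)
    (hD : p0*q1 - p1*q0 ≠ 0)
    (hNp : 0 < p0^2+p1^2) (hNq : 0 < q0^2+q1^2) (hNpq : 0 < (p0-q0)^2+(p1-q1)^2)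
    (hre : s0*(q0 + (p0-q0)/2 + e*t*(p1-q1)/2) - s1*(q1 + (p1-q1)/2 - e*t*(p0-q0)/2) = p0*q0 - p1*q1)
    (him : s0*(q1 + (p1-q1)/2 - e*t*(p0-q0)/2) + s1*(q0 + (p0-q0)/2 + e*t*(p1-q1)/2) = p0*q1 + p1*q0)
    (ho1 : 2*(w0*p0+w1*p1) = p0^2+p1^2)
    (ho2 : 2*(w0*q0+w1*q1) = q0^2+q1^2)
    (hP : s0^2+s1^2 < 2*(w0*s0+w1*s1))
    (hLA : LA^2 = (p0^2+p1^2)*(q0^2+q1^2)) (hLA0 : 0 ≤ LA)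
    (hA : -LA < 2*(p0*q0+p1*q1))
    (hLB : LB^2 = (p0^2+p1^2)*((p0-q0)^2+(p1-q1)^2)) (hLB0 : 0 ≤ LB)
    (hB : -LB < 2*(p0*(p0-q0)+p1*(p1-q1)))
    (hLC : LC^2 = (q0^2+q1^2)*((p0-q0)^2+(p1-q1)^2)) (hLC0 : 0 ≤ LC)
    (hC : -LC < 2*(q0*(q0-p0)+q1*(q1-p1))) :
    0 < (s0*q1 - s1*q0)*(p0*q1 - p1*q0) ∧ 0 < (p0*s1 - p1*s0)*(p0*q1 - p1*q0) ∧
    0 < ((p0*q1 - p1*q0) - (s0*q1 - s1*q0) - (p0*s1 - p1*s0))*(p0*q1 - p1*q0) := by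
  have hM0 : 0 ≤ ((q0 + (p0-q0)/2 + e*t*(p1-q1)/2)^2 + (q1 + (p1-q1)/2 - e*t*(p0-q0)/2)^2) := by positivity
  have hps : (p0*q0-p1*q1)^2 + (p0*q1+p1*q0)^2 = (s0^2+s1^2)*((q0 + (p0-q0)/2 + e*t*(p1-q1)/2)^2 + (q1 + (p1-q1)/2 - e*t*(p0-q0)/2)^2) := by
    linear_combination (-(s0*(q0 + (p0-q0)/2 + e*t*(p1-q1)/2) - s1*(q1 + (p1-q1)/2 - e*t*(p0-q0)/2) + (p0*q0-p1*q1)))*hre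
      + (-(s0*(q1 + (p1-q1)/2 - e*t*(p0-q0)/2) + s1*(q0 + (p0-q0)/2 + e*t*(p1-q1)/2) + (p0*q1+p1*q0)))*him
  have hM : 0 < ((q0 + (p0-q0)/2 + e*t*(p1-q1)/2)^2 + (q1 + (p1-q1)/2 - e*t*(p0-q0)/2)^2) := by
    rcases lt_or_eq_of_le hM0 with h | h
    · exact h
    · exfalso
      have h0 : (p0*q0-p1*q1)^2 + (p0*q1+p1*q0)^2 = 0 := by rw [hps, ← h, mul_zero]
      have hid : (p0^2+p1^2)*(q0^2+q1^2) = (p0*q0-p1*q1)^2 + (p0*q1+p1*q0)^2 := by ring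
      linarith only [h0, hid, mul_pos hNp hNq]
  have hMss : ((q0 + (p0-q0)/2 + e*t*(p1-q1)/2)^2 + (q1 + (p1-q1)/2 - e*t*(p0-q0)/2)^2)*(s0^2+s1^2) = (p0^2+p1^2)*(q0^2+q1^2) := by
    linear_combination (s0*(q0 + (p0-q0)/2 + e*t*(p1-q1)/2) - s1*(q1 + (p1-q1)/2 - e*t*(p0-q0)/2) + (p0*q0-p1*q1))*hre
      + (s0*(q1 + (p1-q1)/2 - e*t*(p0-q0)/2) + s1*(q0 + (p0-q0)/2 + e*t*(p1-q1)/2) + (p0*q1+p1*q0))*him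
  have hMs0 : ((q0 + (p0-q0)/2 + e*t*(p1-q1)/2)^2 + (q1 + (p1-q1)/2 - e*t*(p0-q0)/2)^2)*s0 = (p0*q0-p1*q1)*(q0 + (p0-q0)/2 + e*t*(p1-q1)/2) + (p0*q1+p1*q0)*(q1 + (p1-q1)/2 - e*t*(p0-q0)/2) := by
    linear_combination (q0 + (p0-q0)/2 + e*t*(p1-q1)/2)*hre + (q1 + (p1-q1)/2 - e*t*(p0-q0)/2)*him
  have hMs1 : ((q0 + (p0-q0)/2 + e*t*(p1-q1)/2)^2 + (q1 + (p1-q1)/2 - e*t*(p0-q0)/2)^2)*s1 = (p0*q1+p1*q0)*(q0 + (p0-q0)/2 + e*t*(p1-q1)/2) - (p0*q0-p1*q1)*(q1 + (p1-q1)/2 - e*t*(p0-q0)/2) := by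
    linear_combination (-(q1 + (p1-q1)/2 - e*t*(p0-q0)/2))*hre + (q0 + (p0-q0)/2 + e*t*(p1-q1)/2)*him
  have hbq : 2*(s0*q1-s1*q0)*((q0 + (p0-q0)/2 + e*t*(p1-q1)/2)^2 + (q1 + (p1-q1)/2 - e*t*(p0-q0)/2)^2)
      = (q0^2+q1^2)*((p0*q1-p1*q0) - e*t*(p0*(p0-q0)+p1*(p1-q1))) := by
    linear_combination 2*q1*hMs0 - 2*q0*hMs1
  have hpq : 2*(p0*s1-p1*s0)*((q0 + (p0-q0)/2 + e*t*(p1-q1)/2)^2 + (q1 + (p1-q1)/2 - e*t*(p0-q0)/2)^2)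
      = (p0^2+p1^2)*((p0*q1-p1*q0) - e*t*(q0*(q0-p0)+q1*(q1-p1))) := by
    linear_combination 2*p0*hMs1 - 2*p1*hMs0
  have het : e^2*t^2 = 3 := by rw [he, one_mul, ht]
  have halpha : 2*((p0*q1-p1*q0) - (s0*q1-s1*q0) - (p0*s1-p1*s0))*((q0 + (p0-q0)/2 + e*t*(p1-q1)/2)^2 + (q1 + (p1-q1)/2 - e*t*(p0-q0)/2)^2)
      = ((p0-q0)^2+(p1-q1)^2)*((p0*q1-p1*q0) - e*t*(p0*q0+p1*q1)) := by
    linear_combination (-1)*hbq + (-1)*hpq + ((p0*q1-p1*q0)*((p0-q0)^2+(p1-q1)^2)/2)*het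
  have hPDM : 2*(s0^2+s1^2 - 2*(w0*s0+w1*s1))*(p0*q1-p1*q0)*((q0 + (p0-q0)/2 + e*t*(p1-q1)/2)^2 + (q1 + (p1-q1)/2 - e*t*(p0-q0)/2)^2)
      = e*t*((p0^2+p1^2)*((q0^2+q1^2)*((p0-q0)^2+(p1-q1)^2))) := by
    linear_combination 2*(p0*q1-p1*q0)*hMss + (-2*((q0 + (p0-q0)/2 + e*t*(p1-q1)/2)^2 + (q1 + (p1-q1)/2 - e*t*(p0-q0)/2)^2)*(s0*q1-s1*q0))*ho1
      + (-2*((q0 + (p0-q0)/2 + e*t*(p1-q1)/2)^2 + (q1 + (p1-q1)/2 - e*t*(p0-q0)/2)^2)*(p0*s1-p1*s0))*ho2 + (-(p0^2+p1^2))*hbq + (-(q0^2+q1^2))*hpq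
  have hG : 0 < t*((p0^2+p1^2)*((q0^2+q1^2)*((p0-q0)^2+(p1-q1)^2))) :=
    mul_pos ht0 (mul_pos hNp (mul_pos hNq hNpq))
  have hP' : s0^2+s1^2 - 2*(w0*s0+w1*s1) < 0 := by linarith
  have h2 : 2*(s0^2+s1^2 - 2*(w0*s0+w1*s1))*(e*(p0*q1-p1*q0))*((q0 + (p0-q0)/2 + e*t*(p1-q1)/2)^2 + (q1 + (p1-q1)/2 - e*t*(p0-q0)/2)^2)
      = t*((p0^2+p1^2)*((q0^2+q1^2)*((p0-q0)^2+(p1-q1)^2))) := by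
    linear_combination e*hPDM + (t*((p0^2+p1^2)*((q0^2+q1^2)*((p0-q0)^2+(p1-q1)^2))))*he
  have heD : e*(p0*q1-p1*q0) < 0 := sign_helper _ _ _ _ h2 hP' hM hG
  have he2 : e^2*(p0*q1-p1*q0)^2 = (p0*q1-p1*q0)^2 := by rw [he, one_mul]
  have hD2 : 0 < (p0*q1-p1*q0)^2 := pow_two_pos_of_ne_zero hD
  have hkeyB : 0 < (p0*q1-p1*q0)^2 - e*t*((p0*q1-p1*q0)*(p0*(p0-q0)+p1*(p1-q1))) := by
    rcases le_or_gt 0 (p0*(p0-q0)+p1*(p1-q1)) with hcb | hcb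
    · have h5 : 0 ≤ t*(-(e*(p0*q1-p1*q0)))*(p0*(p0-q0)+p1*(p1-q1)) :=
        mul_nonneg (mul_nonneg ht0.le (by linarith)) hcb
      linarith only [hD2, h5]
    · have e1 : t^2*(p0*(p0-q0)+p1*(p1-q1))^2 = 3*(p0*(p0-q0)+p1*(p1-q1))^2 := by rw [ht]
      have h4 : 0 < LB + 2*(p0*(p0-q0)+p1*(p1-q1)) := by linarith
      have h5 : 0 < LB - 2*(p0*(p0-q0)+p1*(p1-q1)) := by linarith
      have h3 : 3*(p0*(p0-q0)+p1*(p1-q1))^2 < (p0*q1-p1*q0)^2 := by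
        linarith only [mul_pos h4 h5, hLB]
      linarith only [sq_nonneg (t*(p0*(p0-q0)+p1*(p1-q1)) - e*(p0*q1-p1*q0)), e1, he2, h3]
  have hDbq : 2*((s0*q1-s1*q0)*(p0*q1-p1*q0))*((q0 + (p0-q0)/2 + e*t*(p1-q1)/2)^2 + (q1 + (p1-q1)/2 - e*t*(p0-q0)/2)^2)
      = (q0^2+q1^2)*((p0*q1-p1*q0)^2 - e*t*((p0*q1-p1*q0)*(p0*(p0-q0)+p1*(p1-q1)))) := by
    linear_combination (p0*q1-p1*q0)*hbq
  have hresB : 0 < (s0*q1-s1*q0)*(p0*q1-p1*q0) := pos_helper _ _ _ hDbq hM (mul_pos hNq hkeyB)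
  have hkeyC : 0 < (p0*q1-p1*q0)^2 - e*t*((p0*q1-p1*q0)*(q0*(q0-p0)+q1*(q1-p1))) := by
    rcases le_or_gt 0 (q0*(q0-p0)+q1*(q1-p1)) with hcb | hcb
    · have h5 : 0 ≤ t*(-(e*(p0*q1-p1*q0)))*(q0*(q0-p0)+q1*(q1-p1)) :=
        mul_nonneg (mul_nonneg ht0.le (by linarith)) hcb
      linarith only [hD2, h5]
    · have e1 : t^2*(q0*(q0-p0)+q1*(q1-p1))^2 = 3*(q0*(q0-p0)+q1*(q1-p1))^2 := by rw [ht]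
      have h4 : 0 < LC + 2*(q0*(q0-p0)+q1*(q1-p1)) := by linarith
      have h5 : 0 < LC - 2*(q0*(q0-p0)+q1*(q1-p1)) := by linarith
      have h3 : 3*(q0*(q0-p0)+q1*(q1-p1))^2 < (p0*q1-p1*q0)^2 := by
        linarith only [mul_pos h4 h5, hLC]
      linarith only [sq_nonneg (t*(q0*(q0-p0)+q1*(q1-p1)) - e*(p0*q1-p1*q0)), e1, he2, h3]
  have hDpq : 2*((p0*s1-p1*s0)*(p0*q1-p1*q0))*((q0 + (p0-q0)/2 + e*t*(p1-q1)/2)^2 + (q1 + (p1-q1)/2 - e*t*(p0-q0)/2)^2)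
      = (p0^2+p1^2)*((p0*q1-p1*q0)^2 - e*t*((p0*q1-p1*q0)*(q0*(q0-p0)+q1*(q1-p1)))) := by
    linear_combination (p0*q1-p1*q0)*hpq
  have hresC : 0 < (p0*s1-p1*s0)*(p0*q1-p1*q0) := pos_helper _ _ _ hDpq hM (mul_pos hNp hkeyC)
  have hkeyA : 0 < (p0*q1-p1*q0)^2 - e*t*((p0*q1-p1*q0)*(p0*q0+p1*q1)) := by
    rcases le_or_gt 0 (p0*q0+p1*q1) with hcb | hcb
    · have h5 : 0 ≤ t*(-(e*(p0*q1-p1*q0)))*(p0*q0+p1*q1) :=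
        mul_nonneg (mul_nonneg ht0.le (by linarith)) hcb
      linarith only [hD2, h5]
    · have e1 : t^2*(p0*q0+p1*q1)^2 = 3*(p0*q0+p1*q1)^2 := by rw [ht]
      have h4 : 0 < LA + 2*(p0*q0+p1*q1) := by linarith
      have h5 : 0 < LA - 2*(p0*q0+p1*q1) := by linarith
      have h3 : 3*(p0*q0+p1*q1)^2 < (p0*q1-p1*q0)^2 := by
        linarith only [mul_pos h4 h5, hLA]
      linarith only [sq_nonneg (t*(p0*q0+p1*q1) - e*(p0*q1-p1*q0)), e1, he2, h3]
  have hDal : 2*(((p0*q1-p1*q0) - (s0*q1-s1*q0) - (p0*s1-p1*s0))*(p0*q1-p1*q0))*((q0 + (p0-q0)/2 + e*t*(p1-q1)/2)^2 + (q1 + (p1-q1)/2 - e*t*(p0-q0)/2)^2)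
      = ((p0-q0)^2+(p1-q1)^2)*((p0*q1-p1*q0)^2 - e*t*((p0*q1-p1*q0)*(p0*q0+p1*q1))) := by
    linear_combination (p0*q1-p1*q0)*halpha
  have hresA : 0 < ((p0*q1-p1*q0) - (s0*q1-s1*q0) - (p0*s1-p1*s0))*(p0*q1-p1*q0) :=
    pos_helper _ _ _ hDal hM (mul_pos hNpq hkeyA)
  exact ⟨hresB, hresC, hresA⟩

private lemma angle_ineq (X Y Z : Pt) (h : ∠ Y X Z < 2 * π / 3) (hYX : Y ≠ X) (hZX : Z ≠ X) :
    -(dist X Y * dist X Z) < 2 * ((Y 0 - X 0) * (Z 0 - X 0) + (Y 1 - X 1) * (Z 1 - X 1)) := by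
  have h1 : Real.cos (2 * π / 3) < Real.cos (∠ Y X Z) := by
    apply Real.strictAntiOn_cos ⟨angle_nonneg _ _ _, angle_le_pi _ _ _⟩
      ⟨by positivity, by linarith [Real.pi_pos]⟩ h
  have h2 : Real.cos (2 * π / 3) = -(1/2) := by
    rw [show (2:ℝ) * π / 3 = π - π/3 by ring, Real.cos_pi_sub, Real.cos_pi_div_three]
  rw [h2] at h1
  have h3 : Real.cos (∠ Y X Z) = (inner ℝ (Y - X) (Z - X) : ℝ) / (‖Y - X‖ * ‖Z - X‖) := by
    rw [EuclideanGeometry.angle, InnerProductGeometry.cos_angle]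
    norm_num [vsub_eq_sub]
  have hn1 : 0 < ‖Y - X‖ := by simpa [sub_ne_zero] using hYX
  have hn2 : 0 < ‖Z - X‖ := by simpa [sub_ne_zero] using hZX
  have h4 : -(1/2) * (‖Y - X‖ * ‖Z - X‖) < (inner ℝ (Y - X) (Z - X) : ℝ) := by
    rw [h3] at h1
    calc -(1/2) * (‖Y - X‖ * ‖Z - X‖)
        < ((inner ℝ (Y - X) (Z - X) : ℝ) / (‖Y - X‖ * ‖Z - X‖)) * (‖Y - X‖ * ‖Z - X‖) := by
          apply mul_lt_mul_of_pos_right h1 (by positivity)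
      _ = _ := by field_simp
  have h5 : dist X Y = ‖Y - X‖ := by rw [dist_comm, dist_eq_norm]
  have h6 : dist X Z = ‖Z - X‖ := by rw [dist_comm, dist_eq_norm]
  have h7 : (inner ℝ (Y - X) (Z - X) : ℝ)
      = (Y 0 - X 0) * (Z 0 - X 0) + (Y 1 - X 1) * (Z 1 - X 1) := by
    simp [PiLp.inner_apply, Fin.sum_univ_two, RCLike.inner_apply, PiLp.sub_apply]
    ring
  rw [h5, h6]
  rw [h7] at h4
  linarith

private lemma dist_sq_coord (X Y : Pt) : dist X Y ^ 2 = (X 0 - Y 0)^2 + (X 1 - Y 1)^2 := by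
  rw [EuclideanSpace.dist_eq, Real.sq_sqrt (by positivity)]
  simp [Fin.sum_univ_two, Real.dist_eq, sq_abs]

private lemma detD_ne_zero (A B C : Pt) (hABC : AffineIndependent ℝ ![A, B, C]) :
    (B 0 - A 0) * (C 1 - A 1) - (B 1 - A 1) * (C 0 - A 0) ≠ 0 := by
  intro hD
  have hnc := affineIndependent_iff_not_collinear_set.mp hABC
  apply hnc
  have hBA : B ≠ A := fun h =>
    (hABC.injective.ne (show (1 : Fin 3) ≠ 0 by decide)) (by simpa using h)
  have hu' : B 0 - A 0 ≠ 0 ∨ B 1 - A 1 ≠ 0 := by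
    by_contra h
    push_neg at h
    apply hBA
    have : ∀ i : Fin 2, B i = A i := by
      intro i
      fin_cases i
      · show B 0 = A 0; linarith [h.1]
      · show B 1 = A 1; linarith [h.2]
    exact PiLp.ext this
  rw [collinear_iff_of_mem (show A ∈ ({A, B, C} : Set Pt) by simp)]
  refine ⟨B - A, ?_⟩
  intro P hP
  have key : ∀ r : ℝ, P 0 = r * (B 0 - A 0) + A 0 → P 1 = r * (B 1 - A 1) + A 1 →
      ∃ r : ℝ, P = r • (B - A) +ᵥ A := by
    intro r h0 h1
    refine ⟨r, ?_⟩
    have hv : ∀ j : Fin 2, (r • (B - A) +ᵥ A) j = r * (B j - A j) + A j := by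
      intro j
      simp [PiLp.smul_apply, PiLp.sub_apply, smul_eq_mul]
    have : ∀ i : Fin 2, P i = (r • (B - A) +ᵥ A) i := by
      intro i
      fin_cases i
      · rw [show ((⟨0, by omega⟩ : Fin 2)) = (0 : Fin 2) from rfl, hv 0]; linarith
      · rw [show ((⟨1, by omega⟩ : Fin 2)) = (1 : Fin 2) from rfl, hv 1]; linarith
    exact PiLp.ext this
  simp only [Set.mem_insert_iff, Set.mem_singleton_iff] at hP
  rcases hP with rfl | rfl | rfl
  · exact key 0 (by ring) (by ring)
  · exact key 1 (by ring) (by ring)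
  · rcases hu' with h0 | h0
    · exact key ((P 0 - A 0) / (B 0 - A 0)) (by field_simp; ring) (by field_simp; nlinarith [hD])
    · exact key ((P 1 - A 1) / (B 1 - A 1)) (by field_simp; nlinarith [hD]) (by field_simp; ring)

private lemma final_assembly (A B C S : Pt) (hABC : AffineIndependent ℝ ![A, B, C])
    (hD : (B 0 - A 0) * (C 1 - A 1) - (B 1 - A 1) * (C 0 - A 0) ≠ 0)
    (h1 : 0 < ((S 0 - A 0) * (C 1 - A 1) - (S 1 - A 1) * (C 0 - A 0))
        * ((B 0 - A 0) * (C 1 - A 1) - (B 1 - A 1) * (C 0 - A 0)))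
    (h2 : 0 < ((B 0 - A 0) * (S 1 - A 1) - (B 1 - A 1) * (S 0 - A 0))
        * ((B 0 - A 0) * (C 1 - A 1) - (B 1 - A 1) * (C 0 - A 0)))
    (h3 : 0 < (((B 0 - A 0) * (C 1 - A 1) - (B 1 - A 1) * (C 0 - A 0))
        - ((S 0 - A 0) * (C 1 - A 1) - (S 1 - A 1) * (C 0 - A 0))
        - ((B 0 - A 0) * (S 1 - A 1) - (B 1 - A 1) * (S 0 - A 0)))
        * ((B 0 - A 0) * (C 1 - A 1) - (B 1 - A 1) * (C 0 - A 0))) :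
    S ∈ interior (convexHull ℝ ({A, B, C} : Set Pt)) := by
  set Dv := (B 0 - A 0) * (C 1 - A 1) - (B 1 - A 1) * (C 0 - A 0) with hDv
  set J1 := (S 0 - A 0) * (C 1 - A 1) - (S 1 - A 1) * (C 0 - A 0) with hJ1
  set J2 := (B 0 - A 0) * (S 1 - A 1) - (B 1 - A 1) * (S 0 - A 0) with hJ2
  have hβ : 0 < J1 / Dv := div_pos_iff.mpr (mul_pos_iff.mp h1)
  have hγ : 0 < J2 / Dv := div_pos_iff.mpr (mul_pos_iff.mp h2)
  have hα' : 0 < (Dv - J1 - J2) / Dv := div_pos_iff.mpr (mul_pos_iff.mp h3)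
  have hα : 0 < 1 - J1 / Dv - J2 / Dv := by
    have : (Dv - J1 - J2) / Dv = 1 - J1 / Dv - J2 / Dv := by
      rw [sub_div, sub_div, div_self hD]
    linarith [hα', this.symm.le, this.le]
  set α := 1 - J1 / Dv - J2 / Dv with hαd
  set β := J1 / Dv with hβd
  set γ := J2 / Dv with hγd
  have hsum : α + β + γ = 1 := by rw [hαd]; ring
  have hcomb : S = α • A + β • B + γ • C := by
    have hj : ∀ i : Fin 2, S i = α * A i + β * B i + γ * C i := by
      intro i
      have key : ∀ x a b c : ℝ, x * Dv = (Dv - J1 - J2) * a + J1 * b + J2 * c →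
          x = α * a + β * b + γ * c := by
        intro x a b c hx
        rw [hαd, hβd, hγd]
        field_simp
        linarith [hx]
      fin_cases i
      · rw [show ((⟨0, by omega⟩ : Fin 2)) = (0 : Fin 2) from rfl]
        refine key _ _ _ _ ?_
        rw [hDv, hJ1, hJ2]; ring
      · rw [show ((⟨1, by omega⟩ : Fin 2)) = (1 : Fin 2) from rfl]
        refine key _ _ _ _ ?_
        rw [hDv, hJ1, hJ2]; ring
    have : ∀ i : Fin 2, S i = (α • A + β • B + γ • C) i := by
      intro i
      have happ : (α • A + β • B + γ • C) i = α * A i + β * B i + γ * C i := by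
        simp [PiLp.add_apply, PiLp.smul_apply, smul_eq_mul]
      rw [happ]
      exact hj i
    exact PiLp.ext this
  have htot : affineSpan ℝ (Set.range ![A, B, C]) = ⊤ := by
    rw [hABC.affineSpan_eq_top_iff_card_eq_finrank_add_one]
    simp
  let b : AffineBasis (Fin 3) ℝ Pt := ⟨![A, B, C], hABC, htot⟩
  have hrange : ({A, B, C} : Set Pt) = Set.range ⇑b := by
    show _ = Set.range ![A, B, C]
    simp [Matrix.range_cons, Matrix.range_empty]
    ext x
    simp [or_comm, or_left_comm, or_assoc]
  have hScomb : S = Finset.univ.affineCombination ℝ ![A, B, C] ![α, β, γ] := by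
    rw [Finset.affineCombination_eq_linear_combination _ _ _ (by simp [Fin.sum_univ_three, hsum])]
    simp [Fin.sum_univ_three, hcomb]
  rw [hrange, b.interior_convexHull]
  intro i
  have hco : b.coord i S = ![α, β, γ] i := by
    rw [hScomb]
    exact b.coord_apply_combination_of_mem (Finset.mem_univ i) (by simp [Fin.sum_univ_three, hsum])
  rw [hco]
  fin_cases i <;> simpa

set_option maxHeartbeats 4000000 in
theorem stmt1 (A B C S : Pt)
    (hABC : AffineIndependent ℝ ![A, B, C])
    (hA : ∠ B A C < 2 * π / 3) (hB : ∠ A B C < 2 * π / 3) (hC : ∠ B C A < 2 * π / 3)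
    (hS : IsFirstIsodynamic A B C S) :
    S ∈ interior (convexHull ℝ ({A, B, C} : Set Pt)) := by
  obtain ⟨h1S, h2S, h3S, O, r, hOA, hOB, hOC, hOS⟩ := hS
  have hinj := hABC.injective
  have hBA : B ≠ A := fun h => (hinj.ne (show (1:Fin 3) ≠ 0 by decide)) (by simpa using h)
  have hCA : C ≠ A := fun h => (hinj.ne (show (2:Fin 3) ≠ 0 by decide)) (by simpa using h)
  have hCB : C ≠ B := fun h => (hinj.ne (show (2:Fin 3) ≠ 1 by decide)) (by simpa using h)
  have hD : (B 0 - A 0) * (C 1 - A 1) - (B 1 - A 1) * (C 0 - A 0) ≠ 0 := detD_ne_zero A B C hABC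
  -- positivity of squared side lengths
  have hNpNq : (0:ℝ) < ((B 0 - A 0)^2 + (B 1 - A 1)^2) * ((C 0 - A 0)^2 + (C 1 - A 1)^2) := by
    linarith only [pow_two_pos_of_ne_zero hD,
      sq_nonneg ((B 0 - A 0) * (C 0 - A 0) + (B 1 - A 1) * (C 1 - A 1))]
  have hNp : 0 < (B 0 - A 0)^2 + (B 1 - A 1)^2 := by
    rcases mul_pos_iff.mp hNpNq with ⟨h,_⟩ | ⟨h,_⟩
    · exact h
    · linarith only [h, sq_nonneg (B 0 - A 0), sq_nonneg (B 1 - A 1)]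
  have hNq : 0 < (C 0 - A 0)^2 + (C 1 - A 1)^2 := by
    rcases mul_pos_iff.mp hNpNq with ⟨_,h⟩ | ⟨_,h⟩
    · exact h
    · linarith only [h, sq_nonneg (C 0 - A 0), sq_nonneg (C 1 - A 1)]
  have hNpq : 0 < (B 0 - C 0)^2 + (B 1 - C 1)^2 := by
    have hprod : (0:ℝ) < ((B 0 - A 0)^2 + (B 1 - A 1)^2) * ((B 0 - C 0)^2 + (B 1 - C 1)^2) := by
      linarith only [pow_two_pos_of_ne_zero hD,
        sq_nonneg ((B 0 - A 0) * (B 0 - C 0) + (B 1 - A 1) * (B 1 - C 1))]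
    rcases mul_pos_iff.mp hprod with ⟨_,h⟩ | ⟨_,h⟩
    · exact h
    · linarith only [h, sq_nonneg (B 0 - C 0), sq_nonneg (B 1 - C 1)]
  -- squared Apollonius conditions in coordinates
  have h1sq : (dist S B * dist A C)^2 = (dist S C * dist A B)^2 := by rw [h1S]
  rw [mul_pow, mul_pow, dist_sq_coord, dist_sq_coord, dist_sq_coord, dist_sq_coord] at h1sq
  have h2sq : (dist S A * dist B C)^2 = (dist S C * dist B A)^2 := by rw [h2S]
  rw [mul_pow, mul_pow, dist_sq_coord, dist_sq_coord, dist_sq_coord, dist_sq_coord] at h2sq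
  have h1c : ((S 0 - B 0)^2 + (S 1 - B 1)^2) * ((C 0 - A 0)^2 + (C 1 - A 1)^2)
      = ((S 0 - C 0)^2 + (S 1 - C 1)^2) * ((B 0 - A 0)^2 + (B 1 - A 1)^2) := by
    linear_combination h1sq
  have h2c : ((S 0 - A 0)^2 + (S 1 - A 1)^2) * ((B 0 - C 0)^2 + (B 1 - C 1)^2)
      = ((S 0 - C 0)^2 + (S 1 - C 1)^2) * ((B 0 - A 0)^2 + (B 1 - A 1)^2) := by
    linear_combination h2sq
  -- circumcircle conditions in coordinates
  have hO1 : dist O B ^ 2 = dist O A ^ 2 := by rw [hOB, hOA]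
  rw [dist_sq_coord, dist_sq_coord] at hO1
  have ho1 : 2*((O 0 - A 0)*(B 0 - A 0) + (O 1 - A 1)*(B 1 - A 1))
      = (B 0 - A 0)^2 + (B 1 - A 1)^2 := by linear_combination (-1) * hO1
  have hO2 : dist O C ^ 2 = dist O A ^ 2 := by rw [hOC, hOA]
  rw [dist_sq_coord, dist_sq_coord] at hO2
  have ho2 : 2*((O 0 - A 0)*(C 0 - A 0) + (O 1 - A 1)*(C 1 - A 1))
      = (C 0 - A 0)^2 + (C 1 - A 1)^2 := by linear_combination (-1) * hO2
  have hOS' : dist O S < dist O A := by rw [hOA]; exact hOS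
  have hOSsq : dist O S ^ 2 < dist O A ^ 2 :=
    pow_lt_pow_left₀ hOS' dist_nonneg two_ne_zero
  rw [dist_sq_coord, dist_sq_coord] at hOSsq
  have hPc : (S 0 - A 0)^2 + (S 1 - A 1)^2
      < 2*((O 0 - A 0)*(S 0 - A 0) + (O 1 - A 1)*(S 1 - A 1)) := by linarith only [hOSsq]
  -- angle conditions
  have angleA := angle_ineq A B C hA hBA hCA
  have angleB := angle_ineq B A C hB hBA.symm hCB
  have angleC := angle_ineq C B A hC hCB.symm hCA.symm
  have hLAsq : (dist A B * dist A C)^2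
      = ((B 0 - A 0)^2 + (B 1 - A 1)^2) * ((C 0 - A 0)^2 + (C 1 - A 1)^2) := by
    rw [mul_pow, dist_sq_coord, dist_sq_coord]; ring
  have hLBsq : (dist B A * dist B C)^2
      = ((B 0 - A 0)^2 + (B 1 - A 1)^2)
        * (((B 0 - A 0) - (C 0 - A 0))^2 + ((B 1 - A 1) - (C 1 - A 1))^2) := by
    rw [mul_pow, dist_sq_coord, dist_sq_coord]; ring
  have hLCsq : (dist C B * dist C A)^2
      = ((C 0 - A 0)^2 + (C 1 - A 1)^2)
        * (((B 0 - A 0) - (C 0 - A 0))^2 + ((B 1 - A 1) - (C 1 - A 1))^2) := by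
    rw [mul_pow, dist_sq_coord, dist_sq_coord]; ring
  have hLA0 : (0:ℝ) ≤ dist A B * dist A C := mul_nonneg dist_nonneg dist_nonneg
  have hLB0 : (0:ℝ) ≤ dist B A * dist B C := mul_nonneg dist_nonneg dist_nonneg
  have hLC0 : (0:ℝ) ≤ dist C B * dist C A := mul_nonneg dist_nonneg dist_nonneg
  -- S distinct from A
  have hss : 0 < (S 0 - A 0)^2 + (S 1 - A 1)^2 := by
    by_contra hcon
    push_neg at hcon
    have h0 : (S 0 - A 0)^2 + (S 1 - A 1)^2 = 0 := le_antisymm hcon (by positivity)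
    have hs0 : S 0 - A 0 = 0 := by
      have h1 : (S 0 - A 0)^2 = 0 := by
        linarith [sq_nonneg (S 0 - A 0), sq_nonneg (S 1 - A 1)]
      exact (pow_eq_zero_iff two_ne_zero).mp h1
    have hs1 : S 1 - A 1 = 0 := by
      have h1 : (S 1 - A 1)^2 = 0 := by
        linarith [sq_nonneg (S 0 - A 0), sq_nonneg (S 1 - A 1)]
      exact (pow_eq_zero_iff two_ne_zero).mp h1
    have hkey : (S 0 - C 0)^2 + (S 1 - C 1)^2 = (C 0 - A 0)^2 + (C 1 - A 1)^2 := by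
      linear_combination (S 0 + A 0 - 2*C 0)*hs0 + (S 1 + A 1 - 2*C 1)*hs1
    have hz : ((S 0 - A 0)^2 + (S 1 - A 1)^2) * ((B 0 - C 0)^2 + (B 1 - C 1)^2) = 0 := by
      rw [h0, zero_mul]
    have hfin : ((C 0 - A 0)^2 + (C 1 - A 1)^2) * ((B 0 - A 0)^2 + (B 1 - A 1)^2) = 0 := by
      linear_combination (-((B 0 - A 0)^2 + (B 1 - A 1)^2))*hkey + (-1)*h2c + hz
    linarith only [hfin, mul_pos hNq hNp]
  -- cube root of unity case split
  have ht : (Real.sqrt 3)^2 = 3 := Real.sq_sqrt (by norm_num)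
  have ht0 : 0 < Real.sqrt 3 := Real.sqrt_pos.mpr (by norm_num)
  rcases quadcase
      ((S 0 - A 0)*(B 0 - C 0) - (S 1 - A 1)*(B 1 - C 1))
      ((S 0 - A 0)*(B 1 - C 1) + (S 1 - A 1)*(B 0 - C 0))
      ((S 0 - B 0)*(C 0 - A 0) - (S 1 - B 1)*(C 1 - A 1))
      ((S 0 - B 0)*(C 1 - A 1) + (S 1 - B 1)*(C 0 - A 0))
      (Real.sqrt 3) ht
      (by linarith only [mul_pos hss hNpq])
      (by linear_combination h1c - h2c)
      (by linear_combination (-1)*h1c) with ⟨hc1, hc2⟩ | ⟨hc1, hc2⟩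
  · obtain ⟨hres1, hres2, hres3⟩ := branch (B 0 - A 0) (B 1 - A 1) (C 0 - A 0) (C 1 - A 1)
      (S 0 - A 0) (S 1 - A 1) (O 0 - A 0) (O 1 - A 1)
      (dist A B * dist A C) (dist B A * dist B C) (dist C B * dist C A)
      (Real.sqrt 3) 1 ht ht0 (by norm_num) hD hNp hNq (by linarith only [hNpq])
      (by linear_combination hc1) (by linear_combination hc2) ho1 ho2 hPc
      hLAsq hLA0 angleA
      hLBsq hLB0 (by linarith only [angleB])
      hLCsq hLC0 (by linarith only [angleC])
    exact final_assembly A B C S hABC hD hres1 hres2 hres3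
  · obtain ⟨hres1, hres2, hres3⟩ := branch (B 0 - A 0) (B 1 - A 1) (C 0 - A 0) (C 1 - A 1)
      (S 0 - A 0) (S 1 - A 1) (O 0 - A 0) (O 1 - A 1)
      (dist A B * dist A C) (dist B A * dist B C) (dist C B * dist C A)
      (Real.sqrt 3) (-1) ht ht0 (by norm_num) hD hNp hNq (by linarith only [hNpq])
      (by linear_combination hc1) (by linear_combination hc2) ho1 ho2 hPc
      hLAsq hLA0 angleA
      hLBsq hLB0 (by linarith only [angleB])
      hLCsq hLC0 (by linarith only [angleC])
    exact final_assembly A B C S hABC hD hres1 hres2 hres3
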